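/- Let α and β be partial actions of ℤ on compact metric spaces X and Y respectively, and suppose α and β are equivalent, i.e. there is a homeomorphism h : X → Y with h(X_n) = Y_n for all n ∈ ℤ and h(α_n(x)) = β_n(h(x)) for all n ∈ ℤ and all x ∈ X_{-n}. Then ℏ(α) = ℏ(β), where the partial topological entropies are computed with respect to any metrics generating the topologies of X and Y. -/

import Mathlib

open Filter Topology Set

/-- A partial action of the group `ℤ` on a topological space `X`:
open domains `dom n` with `dom 0 = X`, homeomorphisms `act n : dom (-n) → dom n`
(here encoded as globally defined maps, continuous on their domains), satisfying
`α_n(X_{-n} ∩ X_m) = X_n ∩ X_{n+m}` and `α_n ∘ α_m = α_{n+m}` on `X_{-m} ∩ X_{-m-n}`. -/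
structure PartialZAction (X : Type*) [TopologicalSpace X] where
  dom : ℤ → Set X
  act : ℤ → X → X
  isOpen_dom : ∀ n : ℤ, IsOpen (dom n)
  dom_zero : dom 0 = Set.univ
  act_zero : ∀ x : X, act 0 x = x
  image_inter : ∀ n m : ℤ, act n '' (dom (-n) ∩ dom m) = dom n ∩ dom (n + m)
  act_act : ∀ (n m : ℤ) (x : X), x ∈ dom (-m) → x ∈ dom (-m - n) →
    act n (act m x) = act (n + m) x
  continuousOn : ∀ n : ℤ, ContinuousOn (act n) (dom (-n))

variable {X : Type*} [TopologicalSpace X]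

/-- `I_n(x) = {i ∈ {0,…,n-1} : x ∈ X_{-i}}`. -/
def Iset (α : PartialZAction X) (n : ℕ) (x : X) : Set ℕ :=
  {i : ℕ | i < n ∧ x ∈ α.dom (-(i : ℤ))}

/-- `d_n(x,y) = max_{i ∈ I_n(x) ∩ I_n(y)} ρ(α_i(x), α_i(y))`. -/
noncomputable def dynDist (ρ : X → X → ℝ) (α : PartialZAction X) (n : ℕ) (x y : X) : ℝ :=
  sSup ((fun i : ℕ => ρ (α.act i x) (α.act i y)) '' (Iset α n x ∩ Iset α n y))

/-- `A` is `(n,ε)`-separated. -/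
def IsPSeparated (ρ : X → X → ℝ) (α : PartialZAction X) (n : ℕ) (ε : ℝ) (A : Set X) : Prop :=
  ∀ x ∈ A, ∀ y ∈ A, x ≠ y → ε ≤ dynDist ρ α n x y

/-- `B` is `(n,ε)`-spanning for `K`. -/
def IsPSpanning (ρ : X → X → ℝ) (α : PartialZAction X) (n : ℕ) (ε : ℝ) (K B : Set X) : Prop :=
  ∀ x ∈ K, ∃ y ∈ B, Iset α n x = Iset α n y ∧ dynDist ρ α n x y < ε

/-- `𝒰` is an open `(n,ε)`-cover of `K`. -/
def IsPCover (ρ : X → X → ℝ) (α : PartialZAction X) (n : ℕ) (ε : ℝ) (K : Set X)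
    (𝒰 : Set (Set X)) : Prop :=
  (∀ U ∈ 𝒰, IsOpen U) ∧ K ⊆ ⋃₀ 𝒰 ∧ ∀ U ∈ 𝒰, ∀ x ∈ U, ∀ y ∈ U, dynDist ρ α n x y < ε

/-- `sep(n,ε,α,K)`: maximal cardinality of an `(n,ε)`-separated subset of `K`. -/
noncomputable def sepCount (ρ : X → X → ℝ) (α : PartialZAction X) (n : ℕ) (ε : ℝ)
    (K : Set X) : ℕ :=
  sSup {m : ℕ | ∃ A : Finset X, ↑A ⊆ K ∧ IsPSeparated ρ α n ε ↑A ∧ A.card = m}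

/-- `span(n,ε,α,K)`: minimal cardinality of an `(n,ε)`-spanning subset of `K`. -/
noncomputable def spanCount (ρ : X → X → ℝ) (α : PartialZAction X) (n : ℕ) (ε : ℝ)
    (K : Set X) : ℕ :=
  sInf {m : ℕ | ∃ B : Finset X, ↑B ⊆ K ∧ IsPSpanning ρ α n ε K ↑B ∧ B.card = m}

/-- `cov(n,ε,α,K)`: minimal cardinality of a finite `(n,ε)`-cover of `K`. -/
noncomputable def covCount (ρ : X → X → ℝ) (α : PartialZAction X) (n : ℕ) (ε : ℝ)
    (K : Set X) : ℕ :=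
  sInf {m : ℕ | ∃ 𝒰 : Finset (Set X), IsPCover ρ α n ε K ↑𝒰 ∧ 𝒰.card = m}

/-- `h_ε(α,K) = limsup_n (1/n) log sep(n,ε,α,K)`. -/
noncomputable def entSep (ρ : X → X → ℝ) (α : PartialZAction X) (K : Set X) (ε : ℝ) : EReal :=
  Filter.limsup (fun n : ℕ => ((Real.log (sepCount ρ α n ε K) / n : ℝ) : EReal)) Filter.atTop

/-- The partial topological entropy `ℏ_ρ(α) = sup_{K compact} lim_{ε→0} h_ε(α,K)`
(the limit as `ε → 0` is the supremum over `ε > 0` by monotonicity). -/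
noncomputable def pEntropy (ρ : X → X → ℝ) (α : PartialZAction X) : EReal :=
  ⨆ (K : Set X) (_ : IsCompact K), ⨆ (ε : ℝ) (_ : 0 < ε), entSep ρ α K ε

section AuxStmt4

lemma Iset_finite (α : PartialZAction X) (n : ℕ) (x : X) : (Iset α n x).Finite :=
  (Set.finite_Iio n).subset fun _ hi => hi.1

/-- In a compact metric space, the cardinalities of `(n,ε)`-separated finite sets are
uniformly bounded. -/
lemma sep_card_bound {X : Type*} [MetricSpace X] [CompactSpace X] (α : PartialZAction X)
    (n : ℕ) {ε : ℝ} (hε : 0 < ε) :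
    ∃ C : ℕ, ∀ A : Finset X, IsPSeparated dist α n ε ↑A → A.card ≤ C := by
  classical
  obtain ⟨t, -, htfin, htcov⟩ := finite_cover_balls_of_compact (isCompact_univ (X := X))
    (show (0:ℝ) < ε/3 by linarith)
  have hcov : ∀ x : X, ∃ c ∈ htfin.toFinset, dist x c < ε/3 := by
    intro x
    rcases Set.mem_iUnion₂.mp (htcov (Set.mem_univ x)) with ⟨c, hc, hxc⟩
    exact ⟨c, htfin.mem_toFinset.mpr hc, hxc⟩
  set s := htfin.toFinset with hs
  let near : X → {c // c ∈ s} := fun x => ⟨(hcov x).choose, (hcov x).choose_spec.1⟩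
  have hnear : ∀ x, dist x (near x : X) < ε/3 := fun x => (hcov x).choose_spec.2
  let g : X → Fin n → Option {c // c ∈ s} := fun x i =>
    if x ∈ α.dom (-(i : ℤ)) then some (near (α.act i x)) else none
  refine ⟨Fintype.card (Fin n → Option {c // c ∈ s}), fun A hA => ?_⟩
  have hinj : Set.InjOn g ↑A := by
    intro x hx y hy hxy
    by_contra hne
    have hsep := hA x hx y hy hne
    have hle : dynDist dist α n x y ≤ 2*ε/3 := by
      apply Real.sSup_le
      · rintro v ⟨i, ⟨⟨hin, hxd⟩, ⟨-, hyd⟩⟩, rfl⟩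
        have hgi := congrFun hxy ⟨i, hin⟩
        simp only [g, Fin.val_mk, if_pos hxd, if_pos hyd, Option.some_inj] at hgi
        have hcnear : ((near (α.act i x) : X)) = (near (α.act i y) : X) := by
          rw [hgi]
        have tri := dist_triangle_right (α.act i x) (α.act i y) ((near (α.act i x)) : X)
        have h2' : dist (α.act i y) ((near (α.act i x)) : X) < ε/3 := by
          rw [hcnear]; exact hnear _
        have h1' := hnear (α.act i x)
        linarith
      · linarith
    linarith
  calc A.card ≤ Finset.univ.card :=
        Finset.card_le_card_of_injOn g (fun a _ => Finset.mem_univ (g a)) hinj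
    _ = Fintype.card (Fin n → Option {c // c ∈ s}) := Finset.card_univ

/-- One-sided estimate: an equivalence of partial actions gives `ℏ(α) ≤ ℏ(β)`. -/
lemma pEntropy_le_of_equiv {X Y : Type*} [MetricSpace X] [MetricSpace Y] [CompactSpace X]
    [CompactSpace Y] (α : PartialZAction X) (β : PartialZAction Y) (h : X ≃ₜ Y)
    (hdom : ∀ n : ℤ, ⇑h '' α.dom n = β.dom n)
    (hact : ∀ n : ℤ, ∀ x ∈ α.dom (-n), h (α.act n x) = β.act n (h x)) :
    pEntropy dist α ≤ pEntropy dist β := by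
  classical
  have hmem : ∀ (m : ℤ) (x : X), h x ∈ β.dom m ↔ x ∈ α.dom m := by
    intro m x; rw [← hdom m]; exact h.injective.mem_set_image
  have hIset : ∀ (n : ℕ) (x : X), Iset β n (h x) = Iset α n x := by
    intro n x; ext i; simp only [Iset, Set.mem_setOf_eq, hmem]
  unfold pEntropy
  refine iSup₂_le fun K hK => iSup₂_le fun ε hε => ?_
  obtain ⟨δ, hδ, hδε⟩ := Metric.uniformContinuous_iff.mp
    (CompactSpace.uniformContinuous_of_continuous h.symm.continuous) ε hε
  have key : ∀ a b : X, ε ≤ dist a b → δ ≤ dist (h a) (h b) := by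
    intro a b hab
    by_contra hc
    push_neg at hc
    have := hδε hc
    simp only [Homeomorph.symm_apply_apply] at this
    linarith
  -- the separation counts compare
  have hsep : ∀ n : ℕ, sepCount dist α n ε K ≤ sepCount dist β n δ (⇑h '' K) := by
    intro n
    obtain ⟨C, hC⟩ := sep_card_bound β n hδ
    refine csSup_le_csSup' ⟨C, ?_⟩ ?_
    · rintro m ⟨B, -, hBsep, rfl⟩
      exact hC B hBsep
    · rintro m ⟨A, hAK, hAsep, rfl⟩
      refine ⟨A.image h, ?_, ?_, Finset.card_image_of_injective A h.injective⟩
      · rw [Finset.coe_image]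
        exact Set.image_mono hAK
      · intro u hu v hv huv
        rw [Finset.coe_image] at hu hv
        obtain ⟨x, hx, rfl⟩ := hu
        obtain ⟨y, hy, rfl⟩ := hv
        have hne : x ≠ y := fun e => huv (by rw [e])
        have hxy : ε ≤ dynDist dist α n x y := hAsep x hx y hy hne
        unfold dynDist at hxy
        set Sα := (fun i : ℕ => dist (α.act i x) (α.act i y)) '' (Iset α n x ∩ Iset α n y)
          with hSα
        have hfinα : Sα.Finite :=
          (((Iset_finite α n x).subset Set.inter_subset_left).image _)
        have hneα : Sα.Nonempty := by
          by_contra hcon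
          rw [Set.not_nonempty_iff_eq_empty] at hcon
          rw [hcon, Real.sSup_empty] at hxy
          linarith
        obtain ⟨i, hi, hival⟩ := hneα.csSup_mem hfinα
        have hεi : ε ≤ dist (α.act i x) (α.act i y) := by
          simp only at hival
          rw [hival]; exact hxy
        have hδi : δ ≤ dist (h (α.act i x)) (h (α.act i y)) := key _ _ hεi
        have hxd : x ∈ α.dom (-(i : ℤ)) := hi.1.2
        have hyd : y ∈ α.dom (-(i : ℤ)) := hi.2.2
        have hval : δ ≤ dist (β.act i (h x)) (β.act i (h y)) := by
          rw [← hact i x hxd, ← hact i y hyd]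
          exact hδi
        unfold dynDist
        have hmemβ : dist (β.act i (h x)) (β.act i (h y)) ∈
            (fun i : ℕ => dist (β.act i (h x)) (β.act i (h y))) ''
              (Iset β n (h x) ∩ Iset β n (h y)) := by
          refine ⟨i, ?_, rfl⟩
          rw [hIset, hIset]
          exact hi
        have hbβ : BddAbove ((fun i : ℕ => dist (β.act i (h x)) (β.act i (h y))) ''
            (Iset β n (h x) ∩ Iset β n (h y))) :=
          (((Iset_finite β n (h x)).subset Set.inter_subset_left).image _).bddAbove
        exact hval.trans (le_csSup hbβ hmemβ)
  -- compare the entropies at scale ε vs δ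
  have hent : entSep dist α K ε ≤ entSep dist β (⇑h '' K) δ := by
    refine Filter.limsup_le_limsup (Filter.Eventually.of_forall fun n => ?_)
    rw [EReal.coe_le_coe_iff]
    have hab : ((sepCount dist α n ε K : ℕ) : ℝ) ≤ ((sepCount dist β n δ (⇑h '' K) : ℕ) : ℝ) :=
      Nat.cast_le.mpr (hsep n)
    have hlog : Real.log (sepCount dist α n ε K) ≤ Real.log (sepCount dist β n δ (⇑h '' K)) := by
      rcases Nat.eq_zero_or_pos (sepCount dist α n ε K) with h0 | h0
      · rw [h0]
        simp only [Nat.cast_zero, Real.log_zero]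
        exact Real.log_natCast_nonneg _
      · exact Real.log_le_log (by exact_mod_cast h0) hab
    rcases Nat.eq_zero_or_pos n with rfl | hn
    · simp
    · have hn' : (0:ℝ) < n := by exact_mod_cast hn
      exact (div_le_div_iff_of_pos_right hn').mpr hlog
  exact hent.trans (le_iSup₂_of_le (⇑h '' K) (hK.image h.continuous)
    (le_iSup₂_of_le δ hδ le_rfl))

end AuxStmt4

/-- equivalent partial actions on compact metric spaces have the same
partial topological entropy. -/
theorem stmt4 {X Y : Type*} [MetricSpace X] [MetricSpace Y] [CompactSpace X] [CompactSpace Y]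
    (α : PartialZAction X) (β : PartialZAction Y) (h : X ≃ₜ Y)
    (hdom : ∀ n : ℤ, ⇑h '' α.dom n = β.dom n)
    (hact : ∀ n : ℤ, ∀ x ∈ α.dom (-n), h (α.act n x) = β.act n (h x)) :
    pEntropy dist α = pEntropy dist β := by
  refine le_antisymm (pEntropy_le_of_equiv α β h hdom hact)
    (pEntropy_le_of_equiv β α h.symm ?_ ?_)
  · intro n
    rw [← hdom n, Set.image_image]
    simp [Homeomorph.symm_apply_apply]
  · intro n y hy
    have hy' : h.symm y ∈ α.dom (-n) := by
      rw [← hdom (-n)] at hy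
      obtain ⟨x, hx, rfl⟩ := hy
      simpa using hx
    have hx := hact n (h.symm y) hy'
    rw [Homeomorph.apply_symm_apply] at hx
    rw [← hx, Homeomorph.symm_apply_apply]
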